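/- Stress bound in the abstract existence theorem: Under the hypotheses of the abstract existence theorem, if z ∈ Z solves a(z,x)+c(z,z,x) = F(x) for all x ∈ Z with ‖z‖ ≤ ‖F‖/c_a, and S ∈ 𝕊 satisfies b(S,x) = a(z,x)+c(z,z,x)-F(x) for all x ∈ X, then ‖S‖_𝕊 ≤ (1/c_b)(1 + C_a/c_a + (C_c/c_a²)‖F‖)‖F‖, where C_a and C_c are the continuity constants of a and c. -/
import Mathlib


/-- Stress bound in the abstract existence theorem: if `z ∈ Z` satisfies
`‖z‖ ≤ ‖F‖/c_a` and `S` satisfies `b(S,x) = a(z,x) + c(z,z,x) - F(x)` for all `x`,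
then `‖S‖ ≤ (1/c_b)(1 + C_a/c_a + (C_c/c_a²)‖F‖)‖F‖`. -/
theorem stmt_14 {X 𝕊 : Type*}
    [NormedAddCommGroup X] [NormedSpace ℝ X]
    [NormedAddCommGroup 𝕊] [NormedSpace ℝ 𝕊]
    (a : X → X → ℝ) (b : 𝕊 → X → ℝ) (c : X → X → X → ℝ)
    (Z : Set X) (hZ : Z = {x : X | ∀ T : 𝕊, b T x = 0})
    (F : X →L[ℝ] ℝ)
    (ca cb Ca Cc : ℝ) (hca : 0 < ca) (hcb : 0 < cb)
    (hCa : ∀ x y : X, |a x y| ≤ Ca * ‖x‖ * ‖y‖)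
    (hCc : ∀ z₁ z₂ x : X, |c z₁ z₂ x| ≤ Cc * ‖z₁‖ * ‖z₂‖ * ‖x‖)
    (hinfsup : ∀ S : 𝕊, ∀ ε > 0, ∃ x : X, ‖x‖ ≤ 1 ∧ cb * ‖S‖ ≤ b S x + ε)
    (z : X) (hz : z ∈ Z) (hznorm : ‖z‖ ≤ ‖F‖ / ca)
    (hzsol : ∀ x ∈ Z, a z x + c z z x = F x)
    (S : 𝕊) (hS : ∀ x : X, b S x = a z x + c z z x - F x) :
    ‖S‖ ≤ (1 / cb) * (1 + Ca / ca + (Cc / ca^2) * ‖F‖) * ‖F‖ := by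
  -- Handle the degenerate case where X is trivial
  by_cases hX : ∀ x : X, x = 0
  · -- F = 0 and b S x = 0, so ‖S‖ ≤ 0
    have hF : ‖F‖ = 0 := by
      have : F = 0 := by
        ext x; rw [hX x]; simp
      simp [this]
    have hb0 : ∀ x : X, b S x = 0 := by
      intro x
      have hx := hX x
      have ha0 : a z x = 0 := by
        have := hCa z x
        rw [hx] at this ⊢
        simp at this
        exact this
      have hc0 : c z z x = 0 := by
        have := hCc z z x
        rw [hx] at this ⊢
        simp at this
        exact this
      rw [hS x, ha0, hc0, hx]
      simp
    have hSn : cb * ‖S‖ ≤ 0 := by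
      refine le_of_forall_pos_le_add ?_
      intro ε hε
      obtain ⟨x, hx1, hx2⟩ := hinfsup S ε hε
      rw [hb0 x] at hx2
      linarith
    have : ‖S‖ ≤ 0 := by by_contra h; push_neg at h; nlinarith
    rw [hF]
    nlinarith [norm_nonneg S]
  · push_neg at hX
    obtain ⟨x₀, hx₀⟩ := hX
    have hx₀n : 0 < ‖x₀‖ := norm_pos_iff.mpr hx₀
    have hCa0 : 0 ≤ Ca := by
      have h1 := (abs_nonneg (a x₀ x₀)).trans (hCa x₀ x₀)
      nlinarith [mul_pos hx₀n hx₀n]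
    have hCc0 : 0 ≤ Cc := by
      have h1 := (abs_nonneg (c x₀ x₀ x₀)).trans (hCc x₀ x₀ x₀)
      nlinarith [mul_pos (mul_pos hx₀n hx₀n) hx₀n]
    have hFn : 0 ≤ ‖F‖ := norm_nonneg F
    have hzn : 0 ≤ ‖z‖ := norm_nonneg z
    have key : cb * ‖S‖ ≤ (1 + Ca / ca + (Cc / ca^2) * ‖F‖) * ‖F‖ := by
      refine le_of_forall_pos_le_add ?_
      intro ε hε
      obtain ⟨x, hx1, hx2⟩ := hinfsup S ε hε
      have hxn : 0 ≤ ‖x‖ := norm_nonneg x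
      have ha := (le_abs_self (a z x)).trans (hCa z x)
      have hc := (le_abs_self (c z z x)).trans (hCc z z x)
      have hFx : -(F x) ≤ ‖F‖ * ‖x‖ := by
        have := (neg_le_abs (F x)).trans ((F.le_opNorm x).trans_eq' (Real.norm_eq_abs (F x)).symm)
        linarith
      rw [hS x] at hx2
      have hfd : ca * ‖z‖ ≤ ‖F‖ := by
        rw [le_div_iff₀ hca] at hznorm; linarith
      have hM : a z x + c z z x - F x ≤ (1 + Ca / ca + (Cc / ca^2) * ‖F‖) * ‖F‖ := by
        have e1 : Ca * ‖z‖ * ‖x‖ ≤ Ca / ca * ‖F‖ := by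
          rw [div_mul_eq_mul_div, le_div_iff₀ hca]
          have h1 : 0 ≤ (1 - ‖x‖) * (Ca * ‖z‖ * ca) :=
            mul_nonneg (by linarith) (mul_nonneg (mul_nonneg hCa0 hzn) hca.le)
          have h2 : 0 ≤ Ca * (‖F‖ - ca * ‖z‖) := mul_nonneg hCa0 (by linarith)
          nlinarith [h1, h2]
        have e2 : Cc * ‖z‖ * ‖z‖ * ‖x‖ ≤ (Cc / ca^2 * ‖F‖) * ‖F‖ := by
          rw [div_mul_eq_mul_div, div_mul_eq_mul_div, le_div_iff₀ (by positivity)]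
          have hsq : (ca * ‖z‖) * (ca * ‖z‖) ≤ ‖F‖ * ‖F‖ :=
            mul_le_mul hfd hfd (by positivity) hFn
          have h2 : Cc * ((ca * ‖z‖) * (ca * ‖z‖)) ≤ Cc * (‖F‖ * ‖F‖) :=
            mul_le_mul_of_nonneg_left hsq hCc0
          have h1 : 0 ≤ (1 - ‖x‖) * (Cc * ((ca * ‖z‖) * (ca * ‖z‖))) :=
            mul_nonneg (by linarith) (mul_nonneg hCc0 (by positivity))
          nlinarith [h1, h2]
        have e3 : ‖F‖ * ‖x‖ ≤ ‖F‖ := by nlinarith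
        nlinarith
      linarith
    rw [div_mul_eq_mul_div, div_mul_eq_mul_div, one_mul, le_div_iff₀ hcb]
    linarith
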